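/- arXiv:2204.04569 — 2 statements merged into one kernel-verified Lean document; each statement's English description precedes it below -/
import Mathlib

section
/- Let ε > 0 and β_ε be defined by β_ε(s) = s/ε for s < -ε, β_ε(s) = -exp(2(s+ε)/(s-ε)) for -ε ≤ s < ε, and β_ε(s) = 0 for s ≥ ε. Then for all s ∈ ℝ: β_ε(s)·max(0,s) ≥ -ε and β_ε(s)·max(0,-s) ≤ -(max(0,-s))²/ε + ε. -/
noncomputable def betaPen (ε s : ℝ) : ℝ :=
  if s < -ε then s / ε
  else if s < ε then -Real.exp (2 * (s + ε) / (s - ε))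
  else 0

theorem stmt_2 (ε : ℝ) (hε : 0 < ε) (s : ℝ) :
    betaPen ε s * max 0 s ≥ -ε ∧
    betaPen ε s * max 0 (-s) ≤ -(max 0 (-s)) ^ 2 / ε + ε := by
  unfold betaPen
  rcases lt_or_ge s (-ε) with h1 | h1
  · rw [if_pos h1]
    have hs0 : s < 0 := by linarith
    have hmax1 : max 0 s = 0 := max_eq_left hs0.le
    have hmax2 : max 0 (-s) = -s := max_eq_right (by linarith)
    rw [hmax1, hmax2]
    constructor
    · simp; linarith
    · rw [div_mul_eq_mul_div]
      rw [div_add' _ _ _ hε.ne', div_le_div_iff₀ hε hε]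
      nlinarith
  · rw [if_neg (not_lt.2 h1)]
    rcases lt_or_ge s ε with h2 | h2
    · rw [if_pos h2]
      have ht : 2 * (s + ε) / (s - ε) ≤ 0 := by
        apply div_nonpos_of_nonneg_of_nonpos <;> linarith
      have hexp : Real.exp (2 * (s + ε) / (s - ε)) ≤ 1 := by
        calc Real.exp _ ≤ Real.exp 0 := Real.exp_le_exp.2 ht
        _ = 1 := Real.exp_zero
      have hexp0 : 0 < Real.exp (2 * (s + ε) / (s - ε)) := Real.exp_pos _
      constructor
      · have hm : max 0 s ≤ ε := max_le hε.le h2.le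
        have hm0 : 0 ≤ max 0 s := le_max_left _ _
        nlinarith
      · have hm : max 0 (-s) ≤ ε := max_le hε.le (by linarith)
        have hm0 : 0 ≤ max 0 (-s) := le_max_left _ _
        have : -Real.exp (2 * (s + ε) / (s - ε)) * max 0 (-s) ≤ 0 := by nlinarith
        have h2' : -(max 0 (-s))^2/ε + ε ≥ 0 := by
          rw [ge_iff_le, ← sub_nonneg]
          have : -(max 0 (-s))^2/ε + ε - 0 = (ε^2 - (max 0 (-s))^2)/ε := by
            field_simp; ring
          rw [this]
          apply div_nonneg _ hε.le
          nlinarith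
        linarith
    · rw [if_neg (not_lt.2 h2)]
      have hmax2 : max 0 (-s) = 0 := max_eq_left (by linarith)
      rw [hmax2]
      constructor
      · simp; linarith
      · simp; positivity
end

section
/- Let ε > 0 and β_ε be the mollified penalty function defined by β_ε(s) = s/ε for s < -ε, β_ε(s) = -exp(2(s+ε)/(s-ε)) for -ε ≤ s < ε, β_ε(s) = 0 for s ≥ ε. Then β_ε is continuously differentiable on ℝ with 0 ≤ β_ε'(s) ≤ 1/ε for all s. -/
noncomputable def gPen (ε s : ℝ) : ℝ :=
  if s < -ε then 1 / ε
  else if s < ε then 4 * ε * Real.exp (2 * (s + ε) / (s - ε)) / (s - ε) ^ 2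
  else 0

open Set Filter Topology

namespace BetaPenAux

variable {ε : ℝ}

lemma key (hε : 0 < ε) {s : ℝ} (hs : s < ε) :
    Real.exp (2 * (s + ε) / (s - ε)) ≤ (s - ε) ^ 2 / (4 * ε ^ 2) := by
  set t : ℝ := (ε - s) / (2 * ε) with ht
  have ht0 : 0 < t := div_pos (by linarith) (by linarith)
  have hε' : ε ≠ 0 := ne_of_gt hε
  have hne : s - ε ≠ 0 := sub_ne_zero.2 (ne_of_lt hs)
  have hne2 : ε - s ≠ 0 := sub_ne_zero.2 (ne_of_gt hs)
  have h1 : Real.log (1 / t) ≤ 1 / t - 1 := Real.log_le_sub_one_of_pos (by positivity)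
  rw [Real.log_div one_ne_zero (ne_of_gt ht0), Real.log_one] at h1
  have hu : 2 * (s + ε) / (s - ε) = 2 - 2 / t := by
    rw [ht]
    field_simp
    ring
  have h2 : (s - ε) ^ 2 / (4 * ε ^ 2) = t ^ 2 := by
    rw [ht, div_pow, div_eq_div_iff (by positivity) (by positivity)]
    ring
  rw [hu, h2]
  calc Real.exp (2 - 2 / t) ≤ Real.exp (2 * Real.log t) := by
        apply Real.exp_le_exp.2
        rw [show (2:ℝ) / t = 2 * (1 / t) by ring]
        linarith
    _ = t ^ 2 := by
        rw [two_mul, Real.exp_add, Real.exp_log ht0, sq]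

lemma mid_deriv (hε : 0 < ε) {s : ℝ} (hs : s ≠ ε) :
    HasDerivAt (fun x => -Real.exp (2 * (x + ε) / (x - ε)))
      (4 * ε * Real.exp (2 * (s + ε) / (s - ε)) / (s - ε) ^ 2) s := by
  have hne : s - ε ≠ 0 := sub_ne_zero.2 hs
  have h1 : HasDerivAt (fun x : ℝ => 2 * (x + ε)) 2 s := by
    simpa using ((hasDerivAt_id s).add_const ε).const_mul 2
  have h2 : HasDerivAt (fun x : ℝ => x - ε) 1 s := (hasDerivAt_id s).sub_const ε
  have h3 := h1.div h2 hne
  have h4 := h3.exp.neg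
  refine (h4 : HasDerivAt (fun x => -Real.exp (2 * (x + ε) / (x - ε))) _ s).congr_deriv ?_
  change -(Real.exp (2 * (s + ε) / (s - ε)) * _) = _
  field_simp
  ring

lemma betaPen_at_neg (hε : 0 < ε) : betaPen ε (-ε) = -1 := by
  simp only [betaPen, lt_self_iff_false, if_false, neg_lt_self_iff, hε, if_true]
  norm_num

lemma gPen_at_neg (hε : 0 < ε) : gPen ε (-ε) = 1 / ε := by
  simp only [gPen, lt_self_iff_false, if_false, neg_lt_self_iff, hε, if_true]
  rw [show (-ε + ε) = 0 by ring]
  rw [mul_zero, zero_div, Real.exp_zero]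
  rw [show (-ε - ε) = -(2 * ε) by ring]
  rw [neg_pow]
  field_simp
  ring

lemma tendsto_aux (hε : 0 < ε) (n : ℕ) :
    Tendsto (fun s => Real.exp (2 * (s + ε) / (s - ε)) / (ε - s) ^ n)
      (𝓝[<] ε) (𝓝 0) := by
  have hy : Tendsto (fun s : ℝ => 4 * ε / (ε - s)) (𝓝[<] ε) atTop := by
    apply Tendsto.const_mul_atTop (by positivity)
    apply tendsto_inv_nhdsGT_zero.comp
    have h1 : Tendsto (fun s : ℝ => ε - s) (𝓝[<] ε) (𝓝 (ε - ε)) :=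
      (tendsto_const_nhds.sub tendsto_id).mono_left nhdsWithin_le_nhds
    rw [show ε - ε = 0 by ring] at h1
    rw [tendsto_nhdsWithin_iff]
    refine ⟨h1, ?_⟩
    filter_upwards [self_mem_nhdsWithin] with x hx
    simp only [mem_Iio] at hx
    show ε - x ∈ Ioi 0
    simp only [mem_Ioi]
    linarith
  have hmain : Tendsto (fun y : ℝ => Real.exp 2 / (4 * ε) ^ n * (y ^ n * Real.exp (-y)))
      atTop (𝓝 (Real.exp 2 / (4 * ε) ^ n * 0)) :=
    (Real.tendsto_pow_mul_exp_neg_atTop_nhds_zero n).const_mul _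
  rw [mul_zero] at hmain
  have := hmain.comp hy
  apply this.congr'
  filter_upwards [self_mem_nhdsWithin] with s hs
  simp only [mem_Iio] at hs
  have hpos : 0 < ε - s := by linarith
  have hne : ε - s ≠ 0 := ne_of_gt hpos
  have h4 : (4 : ℝ) * ε ≠ 0 := by positivity
  simp only [Function.comp_apply]
  have hne' : s - ε ≠ 0 := fun hc => hne (by linarith [sub_eq_zero.1 hc])
  have hu : 2 * (s + ε) / (s - ε) = 2 + -(4 * ε / (ε - s)) := by
    rw [div_eq_iff hne']
    have : -(4 * ε / (ε - s)) * (s - ε) = 4 * ε := by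
      rw [neg_mul, div_mul_eq_mul_div, ← neg_div, div_eq_iff hne]
      ring
    rw [add_mul, this]
    ring
  rw [hu, Real.exp_add, div_pow]
  field_simp

lemma hasDerivAt_betaPen (hε : 0 < ε) (s : ℝ) :
    HasDerivAt (betaPen ε) (gPen ε s) s := by
  rcases lt_trichotomy s (-ε) with h | h | h
  · -- s < -ε
    have heq : betaPen ε =ᶠ[𝓝 s] fun x => x / ε := by
      filter_upwards [Iio_mem_nhds h] with x hx
      simp only [mem_Iio] at hx
      simp [betaPen, hx]
    have hd : HasDerivAt (fun x : ℝ => x / ε) (1 / ε) s := by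
      simpa using (hasDerivAt_id s).div_const ε
    rw [show gPen ε s = 1 / ε by simp [gPen, h]]
    exact hd.congr_of_eventuallyEq heq
  · -- s = -ε
    subst h
    rw [gPen_at_neg hε]
    have hleft : HasDerivWithinAt (betaPen ε) (1 / ε) (Iic (-ε)) (-ε) := by
      have hd : HasDerivWithinAt (fun x : ℝ => x / ε) (1 / ε) (Iic (-ε)) (-ε) := by
        simpa using ((hasDerivAt_id (-ε)).div_const ε).hasDerivWithinAt
      apply hd.congr
      · intro x hx
        rcases lt_or_eq_of_le (mem_Iic.1 hx) with hlt | heq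
        · simp [betaPen, hlt]
        · subst heq
          rw [betaPen_at_neg hε]
          field_simp
      · rw [betaPen_at_neg hε]; field_simp
    have hright : HasDerivWithinAt (betaPen ε) (1 / ε) (Ici (-ε)) (-ε) := by
      have hd := (mid_deriv hε (show (-ε : ℝ) ≠ ε by intro h; linarith)).hasDerivWithinAt
        (s := Ici (-ε))
      have hval : 4 * ε * Real.exp (2 * (-ε + ε) / (-ε - ε)) / (-ε - ε) ^ 2 = 1 / ε := by
        rw [show (-ε + ε) = 0 by ring, mul_zero, zero_div, Real.exp_zero]
        rw [show (-ε - ε) = -(2 * ε) by ring, neg_pow]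
        field_simp; ring
      rw [hval] at hd
      apply hd.congr_of_eventuallyEq
      · have hmem : Ico (-ε) ε ∈ 𝓝[Ici (-ε)] (-ε) := by
          apply mem_nhdsWithin.2
          exact ⟨Iio ε, isOpen_Iio, by simp; linarith, fun x hx => ⟨hx.2, hx.1⟩⟩
        filter_upwards [hmem] with x hx
        simp [betaPen, not_lt.2 hx.1, hx.2]
      · rw [betaPen_at_neg hε]
        rw [show (-ε + ε) = 0 by ring, mul_zero, zero_div, Real.exp_zero]
    have := hleft.union hright
    rwa [Iic_union_Ici, hasDerivWithinAt_univ] at this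
  · rcases lt_trichotomy s ε with h2 | h2 | h2
    · -- -ε < s < ε
      have heq : betaPen ε =ᶠ[𝓝 s] fun x => -Real.exp (2 * (x + ε) / (x - ε)) := by
        filter_upwards [Ioo_mem_nhds h h2] with x hx
        obtain ⟨hx1, hx2⟩ := hx
        simp [betaPen, not_lt.2 (le_of_lt hx1), hx2]
      rw [show gPen ε s = 4 * ε * Real.exp (2 * (s + ε) / (s - ε)) / (s - ε) ^ 2 by
        simp [gPen, not_lt.2 (le_of_lt h), h2]]
      exact (mid_deriv hε (ne_of_lt h2)).congr_of_eventuallyEq heq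
    · -- s = ε
      obtain rfl := h2.symm
      rw [show gPen ε ε = 0 by simp [gPen, not_lt.2 (le_of_lt h), lt_irrefl]]
      have hright : HasDerivWithinAt (betaPen ε) 0 (Ici ε) ε := by
        have hd : HasDerivWithinAt (fun _ : ℝ => (0:ℝ)) 0 (Ici ε) ε :=
          (hasDerivAt_const ε (0:ℝ)).hasDerivWithinAt
        apply hd.congr
        · intro x hx
          have h1 : ¬ x < -ε := by simp only [mem_Ici] at hx; intro hc; linarith
          have h2 : ¬ x < ε := not_lt.2 (mem_Ici.1 hx)
          simp [betaPen, h1, h2]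
        · simp [betaPen, not_lt.2 (le_refl ε), show ¬ (ε < -ε) by intro hc; linarith]
      have hleft : HasDerivWithinAt (betaPen ε) 0 (Iic ε) ε := by
        rw [hasDerivWithinAt_iff_tendsto_slope, Iic_diff_right]
        have haux := tendsto_aux hε 1
        apply haux.congr'
        have hmem : Ioo (-ε) ε ∈ 𝓝[<] ε := Ioo_mem_nhdsLT_of_mem ⟨by linarith, le_refl ε⟩
        filter_upwards [hmem] with x hx
        have hne : x - ε ≠ 0 := ne_of_lt (by linarith [hx.2])
        have hfx : betaPen ε x = -Real.exp (2 * (x + ε) / (x - ε)) := by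
          simp [betaPen, not_lt.2 (le_of_lt hx.1), hx.2]
        have hfe : betaPen ε ε = 0 := by
          simp [betaPen, not_lt.2 (le_refl ε), show ¬ (ε < -ε) by intro hc; linarith]
        have hne2 : ε - x ≠ 0 := fun hc => hne (by linarith [sub_eq_zero.1 hc])
        rw [slope_def_field, hfx, hfe, pow_one, sub_zero, div_eq_div_iff hne2 hne]
        ring
      have := hleft.union hright
      rwa [Iic_union_Ici, hasDerivWithinAt_univ] at this
    · -- ε < s
      have heq : betaPen ε =ᶠ[𝓝 s] fun _ => (0:ℝ) := by
        filter_upwards [Ioi_mem_nhds h2] with x hx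
        simp only [mem_Ioi] at hx
        have h1 : ¬ x < -ε := by intro hc; linarith
        have h3 : ¬ x < ε := by linarith
        simp [betaPen, h1, h3]
      rw [show gPen ε s = 0 by
        simp [gPen, show ¬ s < -ε by intro hc; linarith, not_lt.2 (le_of_lt h2)]]
      exact (hasDerivAt_const s (0:ℝ)).congr_of_eventuallyEq heq

lemma continuous_gPen (hε : 0 < ε) : Continuous (gPen ε) := by
  rw [continuous_iff_continuousAt]
  intro s
  have hφcont : ∀ x : ℝ, x ≠ ε →
      ContinuousAt (fun y => 4 * ε * Real.exp (2 * (y + ε) / (y - ε)) / (y - ε) ^ 2) x := by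
    intro x hx
    have hne : x - ε ≠ 0 := sub_ne_zero.2 hx
    have hinner : ContinuousAt (fun y : ℝ => 2 * (y + ε) / (y - ε)) x :=
      ContinuousAt.div (by fun_prop) (by fun_prop) hne
    exact ContinuousAt.div
      ((Real.continuous_exp.continuousAt.comp hinner).const_mul (4 * ε))
      (by fun_prop) (pow_ne_zero 2 hne)
  rcases lt_trichotomy s (-ε) with h | h | h
  · have heq : gPen ε =ᶠ[𝓝 s] fun _ => 1 / ε := by
      filter_upwards [Iio_mem_nhds h] with x hx
      simp only [mem_Iio] at hx
      simp [gPen, hx]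
    exact continuousAt_const.congr heq.symm
  · subst h
    have hleft : ContinuousWithinAt (gPen ε) (Iic (-ε)) (-ε) := by
      apply (continuousWithinAt_const (b := 1 / ε)).congr
      · intro x hx
        rcases lt_or_eq_of_le (mem_Iic.1 hx) with hlt | heq
        · simp [gPen, hlt]
        · subst heq; exact gPen_at_neg hε
      · exact gPen_at_neg hε
    have hright : ContinuousWithinAt (gPen ε) (Ici (-ε)) (-ε) := by
      have hφ := (hφcont (-ε) (by intro hc; linarith)).continuousWithinAt
        (s := Ici (-ε))
      apply hφ.congr_of_eventuallyEq
      · have hmem : Ico (-ε) ε ∈ 𝓝[Ici (-ε)] (-ε) := by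
          apply mem_nhdsWithin.2
          exact ⟨Iio ε, isOpen_Iio, by simp; linarith, fun x hx => ⟨hx.2, hx.1⟩⟩
        filter_upwards [hmem] with x hx
        simp [gPen, not_lt.2 hx.1, hx.2]
      · rw [gPen_at_neg hε]
        rw [show (-ε + ε) = 0 by ring, mul_zero, zero_div, Real.exp_zero]
        rw [show (-ε - ε) = -(2 * ε) by ring, neg_pow]
        field_simp; ring
    have := hleft.union hright
    rwa [Iic_union_Ici, continuousWithinAt_univ] at this
  · rcases lt_trichotomy s ε with h2 | h2 | h2
    · have heq : gPen ε =ᶠ[𝓝 s]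
          fun y => 4 * ε * Real.exp (2 * (y + ε) / (y - ε)) / (y - ε) ^ 2 := by
        filter_upwards [Ioo_mem_nhds h h2] with x hx
        obtain ⟨hx1, hx2⟩ := hx
        simp [gPen, not_lt.2 (le_of_lt hx1), hx2]
      exact (hφcont s (ne_of_lt h2)).congr heq.symm
    · obtain rfl := h2.symm
      have hgε : gPen ε ε = 0 := by
        simp [gPen, not_lt.2 (le_of_lt h), lt_irrefl]
      have hright : ContinuousWithinAt (gPen ε) (Ici ε) ε := by
        apply (continuousWithinAt_const (b := (0:ℝ))).congr
        · intro x hx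
          have h1 : ¬ x < -ε := by simp only [mem_Ici] at hx; intro hc; linarith
          have h3 : ¬ x < ε := not_lt.2 (mem_Ici.1 hx)
          simp [gPen, h1, h3]
        · exact hgε
      have hleft : ContinuousWithinAt (gPen ε) (Iic ε) ε := by
        rw [← continuousWithinAt_diff_self, Iic_diff_right]
        unfold ContinuousWithinAt
        rw [hgε]
        have haux := (tendsto_aux hε 2).const_mul (4 * ε)
        rw [mul_zero] at haux
        apply haux.congr'
        have hmem : Ioo (-ε) ε ∈ 𝓝[<] ε := Ioo_mem_nhdsLT_of_mem ⟨by linarith, le_refl ε⟩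
        filter_upwards [hmem] with x hx
        have hne : x - ε ≠ 0 := ne_of_lt (by linarith [hx.2])
        have hsq : (x - ε) ^ 2 = (ε - x) ^ 2 := by ring
        simp only [gPen, not_lt.2 (le_of_lt hx.1), if_false, hx.2, if_true]
        rw [hsq]
        ring
      have := hleft.union hright
      rwa [Iic_union_Ici, continuousWithinAt_univ] at this
    · have heq : gPen ε =ᶠ[𝓝 s] fun _ => (0:ℝ) := by
        filter_upwards [Ioi_mem_nhds h2] with x hx
        simp only [mem_Ioi] at hx
        have h1 : ¬ x < -ε := by intro hc; linarith
        have h3 : ¬ x < ε := by linarith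
        simp [gPen, h1, h3]
      exact continuousAt_const.congr heq.symm

end BetaPenAux

theorem stmt_4 (ε : ℝ) (hε : 0 < ε) :
    ContDiff ℝ 1 (betaPen ε) ∧
    ∀ s : ℝ, 0 ≤ deriv (betaPen ε) s ∧ deriv (betaPen ε) s ≤ 1 / ε := by
  have hderiv : deriv (betaPen ε) = gPen ε :=
    funext fun s => (BetaPenAux.hasDerivAt_betaPen hε s).deriv
  constructor
  · rw [contDiff_one_iff_deriv]
    refine ⟨fun s => (BetaPenAux.hasDerivAt_betaPen hε s).differentiableAt, ?_⟩
    rw [hderiv]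
    exact BetaPenAux.continuous_gPen hε
  · intro s
    rw [hderiv]
    unfold gPen
    split_ifs with h1 h2
    · constructor
      · positivity
      · exact le_refl _
    · have hne : s - ε ≠ 0 := sub_ne_zero.2 (ne_of_lt h2)
      have hsq : (0:ℝ) < (s - ε) ^ 2 := by positivity
      constructor
      · positivity
      · rw [div_le_div_iff₀ hsq (by positivity)]
        have hk := BetaPenAux.key hε h2
        have hk' : Real.exp (2 * (s + ε) / (s - ε)) * (4 * ε ^ 2) ≤ (s - ε) ^ 2 :=
          (le_div_iff₀ (by positivity : (0:ℝ) < 4 * ε ^ 2)).mp hk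
        nlinarith [hk']
    · exact ⟨le_refl 0, by positivity⟩
end
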